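/- arXiv:1401.1403 — 2 statements merged into one kernel-verified Lean document; each statement's English description precedes it below -/
import Mathlib

section
/- Let $r : [0,1] \to [0,1]$ be continuously differentiable in a neighborhood of $d_0 \in (0,1)$ with $r(d_0) = 1/2$ and $r'(d_0) > 0$, and let $\xi_n$ be random variables with $s_n (\hat a_n - d_0) = \xi_n$ for a sequence $s_n \to \infty$, where $\xi_n \to \xi$ almost surely for some finite random variable $\xi$. Then $s_n^2 \big( \mathcal{R}(f_{\hat a_n}) - \mathcal{R}(f^*) \big) = s_n \int_{d_0}^{\hat a_n} 2(r(x)-1/2)\,dx \to r'(d_0)\, \xi^2$ almost surely. -/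
open MeasureTheory Filter Topology

theorem stmt_7 {Ω : Type*} [MeasurableSpace Ω] (P : Measure Ω) [IsProbabilityMeasure P]
    (r : ℝ → ℝ) (d0 : ℝ) (hd0 : d0 ∈ Set.Ioo (0 : ℝ) 1) (hr0 : r d0 = 1 / 2)
    (δ0 : ℝ) (hδ0 : 0 < δ0)
    (hdiff : ∀ x ∈ Metric.ball d0 δ0, DifferentiableAt ℝ r x)
    (hcont : ContinuousOn (deriv r) (Metric.ball d0 δ0))
    (hpos : 0 < deriv r d0)
    (s : ℕ → ℝ) (hs : ∀ n, 0 < s n) (hstend : Tendsto s atTop atTop)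
    (ξ : ℕ → Ω → ℝ) (ξlim : Ω → ℝ)
    (hAS : ∀ᵐ ω ∂P, Tendsto (fun n => ξ n ω) atTop (nhds (ξlim ω))) :
    ∀ᵐ ω ∂P,
      Tendsto (fun n => (s n) ^ 2 * ∫ x in d0..(d0 + ξ n ω / s n), 2 * (r x - 1 / 2))
        atTop (nhds (deriv r d0 * (ξlim ω) ^ 2)) := by
  set L := deriv r d0 with hL
  set h : ℝ → ℝ := fun x => 2 * (r x - 1 / 2) with hh
  set F : ℝ → ℝ := fun t => ∫ x in d0..(d0 + t), h x with hFdef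
  have hball : IsOpen (Metric.ball d0 δ0) := Metric.isOpen_ball
  have hcontAt : ∀ x ∈ Metric.ball d0 δ0, ContinuousAt h x := fun x hx => by
    exact (((hdiff x hx).continuousAt).sub continuousAt_const).const_mul 2
  -- F has derivative h (d0 + t) at each t with |t| < δ0
  have hFderiv : ∀ t ∈ Metric.ball (0 : ℝ) δ0, HasDerivAt F (h (d0 + t)) t := by
    intro t ht
    have hmem : d0 + t ∈ Metric.ball d0 δ0 := by
      simp only [Metric.mem_ball, Real.dist_eq] at ht ⊢
      simpa using ht
    have hsub : Set.uIcc d0 (d0 + t) ⊆ Metric.ball d0 δ0 := by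
      apply Set.OrdConnected.uIcc_subset (convex_ball d0 δ0).ordConnected
      · simpa using hδ0
      · exact hmem
    have hint : IntervalIntegrable h volume d0 (d0 + t) :=
      ((continuousOn_of_forall_continuousAt hcontAt).mono hsub).intervalIntegrable
    have hmeas : StronglyMeasurableAtFilter h (𝓝 (d0 + t)) volume :=
      ContinuousAt.stronglyMeasurableAtFilter hball hcontAt _ hmem
    have H : HasDerivAt (fun u => ∫ x in d0..u, h x) (h (d0 + t)) (d0 + t) :=
      intervalIntegral.integral_hasDerivAt_right hint hmeas (hcontAt _ hmem)
    have Hc : HasDerivAt (fun u : ℝ => d0 + u) 1 t := by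
      simpa using (hasDerivAt_id t).const_add d0
    have := H.comp t Hc
    rw [mul_one] at this
    exact this
  have hF0 : F 0 = 0 := by simp [hFdef]
  -- slope of r at d0
  have hrd : HasDerivAt r L d0 := (hdiff d0 (by simpa using hδ0)).hasDerivAt
  have hslope : Tendsto (fun t : ℝ => (r (d0 + t) - r d0) / t) (nhdsWithin 0 {0}ᶜ) (𝓝 L) := by
    have := hasDerivAt_iff_tendsto_slope.mp hrd
    have hmap : Tendsto (fun t : ℝ => d0 + t) (nhdsWithin 0 {0}ᶜ) (nhdsWithin d0 {d0}ᶜ) := by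
      apply Tendsto.inf
      · have := (continuous_add_left d0).tendsto (0 : ℝ)
        rw [add_zero] at this
        exact this
      · apply tendsto_principal_principal.mpr
        intro t ht
        simp only [Set.mem_compl_iff, Set.mem_singleton_iff] at *
        intro hc; exact ht (by linarith)
    refine (this.comp hmap).congr fun t => ?_
    simp [slope, Function.comp, add_sub_cancel_left, div_eq_inv_mul]
  -- L'Hopital: F t / t^2 → L as t → 0 (punctured)
  have key : Tendsto (fun t => F t / t ^ 2) (nhdsWithin 0 {0}ᶜ) (𝓝 L) := by
    have hmemb : Metric.ball (0 : ℝ) δ0 ∈ 𝓝 (0 : ℝ) :=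
      Metric.ball_mem_nhds _ hδ0
    apply HasDerivAt.lhopital_zero_nhdsNE
      (f' := fun t => h (d0 + t)) (g' := fun t => 2 * t)
    · apply eventually_nhdsWithin_of_eventually_nhds
      filter_upwards [hmemb] with t ht using hFderiv t ht
    · filter_upwards with t
      simpa [mul_comm] using ((hasDerivAt_pow 2 t))
    · filter_upwards [self_mem_nhdsWithin] with t ht
      exact mul_ne_zero two_ne_zero ht
    · apply tendsto_nhdsWithin_of_tendsto_nhds
      have : ContinuousAt F 0 := (hFderiv 0 (by simpa using hδ0)).continuousAt
      simpa [hF0] using this.tendsto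
    · apply tendsto_nhdsWithin_of_tendsto_nhds
      have : Tendsto (fun t : ℝ => t ^ 2) (𝓝 0) (𝓝 ((0:ℝ) ^ 2)) :=
        (continuous_pow 2).tendsto 0
      simpa using this
    · refine hslope.congr' ?_
      filter_upwards [self_mem_nhdsWithin] with t ht
      rw [hh]
      rw [mul_div_mul_left _ _ (two_ne_zero), hr0]
  -- extend to the full neighborhood via ψ
  set ψ : ℝ → ℝ := fun t => if t = 0 then L else F t / t ^ 2 with hψdef
  have hψtend : Tendsto ψ (𝓝 0) (𝓝 L) := by
    rw [← nhdsNE_sup_pure (0 : ℝ), tendsto_sup]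
    constructor
    · refine key.congr' ?_
      filter_upwards [self_mem_nhdsWithin] with t ht
      simp only [Set.mem_compl_iff, Set.mem_singleton_iff] at ht
      simp [hψdef, ht]
    · have h0 : ψ 0 = L := by simp [hψdef]
      simpa [h0] using tendsto_pure_nhds ψ 0
  filter_upwards [hAS] with ω hω
  have htend : Tendsto (fun n => ξ n ω / s n) atTop (𝓝 0) := by
    have h1 : Tendsto (fun n => (s n)⁻¹) atTop (𝓝 0) := hstend.inv_tendsto_atTop
    have := hω.mul h1
    simpa [div_eq_mul_inv] using this
  have heq : ∀ n, (s n) ^ 2 * F (ξ n ω / s n) = (ξ n ω) ^ 2 * ψ (ξ n ω / s n) := by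
    intro n
    by_cases hz : ξ n ω / s n = 0
    · have hz' : ξ n ω = 0 := by
        rw [div_eq_zero_iff] at hz
        rcases hz with hz | hz
        · exact hz
        · exact absurd hz (ne_of_gt (hs n))
      simp [hψdef, hz, hz', hF0]
    · have hz' : ξ n ω ≠ 0 := fun hc => hz (by simp [hc])
      simp only [hψdef, hz, if_false]
      field_simp
  have hmul := ((hω.pow 2).mul (hψtend.comp htend))
  have : Tendsto (fun n => (ξ n ω) ^ 2 * ψ (ξ n ω / s n)) atTop (𝓝 (ξlim ω ^ 2 * L)) := hmul
  rw [mul_comm] at this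
  refine this.congr fun n => ?_
  rw [← heq n]
end

section
/- Fix $a_1, a_2 > 0$ with $a_1 \ne a_2$, $d_0 \in \mathbb{R}$, and define $m(x) = \exp(-a_1 (d_0 - x))$ for $x \le d_0$ and $m(x) = \exp(-a_2 (x - d_0))$ for $x > d_0$. For $b > 0$ let $M(d) = \int_{d-b}^{d+b} m(x)\,dx$. Then, provided $|d^* - d_0| < b$ where $d^* = d_0 + (a_1 - a_2) b/(a_1 + a_2)$, the function $M$ attains its unique maximum at $d = d^*$, which differs from $d_0$ whenever $a_1 \ne a_2$. -/
open MeasureTheory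

theorem stmt_10 (a1 a2 : ℝ) (h1 : 0 < a1) (h2 : 0 < a2) (hne : a1 ≠ a2)
    (d0 b : ℝ) (hb : 0 < b)
    (m : ℝ → ℝ)
    (hm : ∀ x : ℝ, m x = if x ≤ d0 then Real.exp (-a1 * (d0 - x)) else Real.exp (-a2 * (x - d0)))
    (M : ℝ → ℝ) (hM : ∀ d, M d = ∫ x in (d - b)..(d + b), m x)
    (dstar : ℝ) (hdstar : dstar = d0 + (a1 - a2) * b / (a1 + a2))
    (hclose : |dstar - d0| < b) :
    (∀ d : ℝ, d ≠ dstar → M d < M dstar) ∧ dstar ≠ d0 := by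
  have hsum : (0:ℝ) < a1 + a2 := by linarith
  have hlo : d0 - b < dstar := by
    have := abs_lt.mp hclose; linarith [this.1]
  have hhi : dstar < d0 + b := by
    have := abs_lt.mp hclose; linarith [this.2]
  -- continuity of m
  have hmfun : m = fun x => if x ≤ d0 then Real.exp (-a1 * (d0 - x)) else Real.exp (-a2 * (x - d0)) :=
    funext hm
  have hmcont : Continuous m := by
    rw [hmfun]
    apply Continuous.if_le
    · exact (Real.continuous_exp.comp (by continuity))
    · exact (Real.continuous_exp.comp (by continuity))
    · exact continuous_id
    · exact continuous_const
    · intro x hx; simp [hx]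
  have hint : ∀ u v : ℝ, IntervalIntegrable m volume u v := fun u v =>
    hmcont.intervalIntegrable u v
  -- derivative of M
  have hMderiv : ∀ d : ℝ, HasDerivAt M (m (d + b) - m (d - b)) d := by
    intro d
    have hMeq : ∀ d' : ℝ, M d' = (∫ x in d0..(d' + b), m x) - ∫ x in d0..(d' - b), m x := by
      intro d'
      rw [hM d', intervalIntegral.integral_interval_sub_left (hint _ _) (hint _ _)]
    have h1d : HasDerivAt (fun u : ℝ => ∫ x in d0..u, m x) (m (d + b)) (d + b) :=
      intervalIntegral.integral_hasDerivAt_right (hint _ _)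
        (hmcont.aestronglyMeasurable.stronglyMeasurableAtFilter) hmcont.continuousAt
    have h2d : HasDerivAt (fun u : ℝ => ∫ x in d0..u, m x) (m (d - b)) (d - b) :=
      intervalIntegral.integral_hasDerivAt_right (hint _ _)
        (hmcont.aestronglyMeasurable.stronglyMeasurableAtFilter) hmcont.continuousAt
    have hp : HasDerivAt (fun d' : ℝ => ∫ x in d0..(d' + b), m x) (m (d + b)) d := by
      have := h1d.comp d ((hasDerivAt_id d).add_const b)
      simpa [Function.comp_def] using this
    have hq : HasDerivAt (fun d' : ℝ => ∫ x in d0..(d' - b), m x) (m (d - b)) d := by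
      have := h2d.comp d ((hasDerivAt_id d).sub_const b)
      simpa [Function.comp_def] using this
    have := hp.sub hq
    simpa [← hMeq, Pi.sub_def] using this
  -- sign of the derivative
  have hpos : ∀ d : ℝ, d < dstar → m (d - b) < m (d + b) := by
    intro d hd
    rw [hm (d - b), hm (d + b)]
    by_cases h : d + b ≤ d0
    · rw [if_pos (by linarith), if_pos h]
      apply Real.exp_lt_exp.mpr
      nlinarith
    · push_neg at h
      rw [if_pos (by linarith : d - b ≤ d0), if_neg (not_le.mpr h)]
      apply Real.exp_lt_exp.mpr
      have hd' : (a1 + a2) * (d - d0) < (a1 - a2) * b := by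
        rw [hdstar] at hd
        have := (lt_div_iff₀ hsum).mp (by linarith : d - d0 < (a1 - a2) * b / (a1 + a2))
        linarith [this]
      nlinarith
  have hneg : ∀ d : ℝ, dstar < d → m (d + b) < m (d - b) := by
    intro d hd
    rw [hm (d - b), hm (d + b)]
    by_cases h : d - b ≤ d0
    · rw [if_pos h, if_neg (not_le.mpr (by linarith : d0 < d + b))]
      apply Real.exp_lt_exp.mpr
      have hd' : (a1 - a2) * b < (a1 + a2) * (d - d0) := by
        rw [hdstar] at hd
        have := (div_lt_iff₀ hsum).mp (by linarith : (a1 - a2) * b / (a1 + a2) < d - d0)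
        linarith [this]
      nlinarith
    · push_neg at h
      rw [if_neg (not_le.mpr h), if_neg (not_le.mpr (by linarith : d0 < d + b))]
      apply Real.exp_lt_exp.mpr
      nlinarith
  -- strict monotonicity
  have hMC : Continuous M := by
    have : Differentiable ℝ M := fun d => (hMderiv d).differentiableAt
    exact this.continuous
  have hmono : StrictMonoOn M (Set.Iic dstar) := by
    apply strictMonoOn_of_deriv_pos (convex_Iic dstar) hMC.continuousOn
    intro x hx
    rw [interior_Iic] at hx
    rw [(hMderiv x).deriv]
    have := hpos x hx
    linarith
  have hanti : StrictAntiOn M (Set.Ici dstar) := by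
    apply strictAntiOn_of_deriv_neg (convex_Ici dstar) hMC.continuousOn
    intro x hx
    rw [interior_Ici] at hx
    rw [(hMderiv x).deriv]
    have := hneg x hx
    linarith
  constructor
  · intro d hd
    rcases lt_or_gt_of_ne hd with h | h
    · exact hmono (Set.mem_Iic.mpr (le_of_lt h)) (Set.mem_Iic.mpr le_rfl) h
    · exact hanti (Set.mem_Ici.mpr le_rfl) (Set.mem_Ici.mpr (le_of_lt h)) h
  · have hnz : (a1 - a2) * b / (a1 + a2) ≠ 0 :=
      div_ne_zero (mul_ne_zero (sub_ne_zero.mpr hne) hb.ne') hsum.ne'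
    rw [hdstar]
    intro h
    exact hnz (by linarith)
end
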